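/- The function $A_3(-s,s) := \zeta(3)\, \zeta(\tfrac{3}{2} - 3s) \prod_p \Big( 1 - \frac{1}{p^{3/2+s}} + \frac{1}{p^{5/2-s}} - \frac{1}{p^{5/2-3s}} - \frac{1}{p^{3-4s}} + \frac{1}{p^{9/2-5s}} \Big)$ is meromorphic on the strip $|\mathrm{Re}(s)| < 1/2$, with the Euler product converging absolutely there; its only pole in that strip is a simple pole at $s = 1/6$, with residue $-\frac{\zeta(3)}{3\, \zeta(5/3)\, \zeta(2)}$. -/

import Mathlib

open Complex Filter Topology

/-- The local Euler factor of `A₃(-s,s)` at the prime `p`. -/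
noncomputable def A3local (s : ℂ) (p : ℕ) : ℂ :=
  1 - (p : ℂ) ^ (-(3/2 + s)) + (p : ℂ) ^ (-(5/2 - s)) - (p : ℂ) ^ (-(5/2 - 3*s))
    - (p : ℂ) ^ (-(3 - 4*s)) + (p : ℂ) ^ (-(9/2 - 5*s))

/-- The analytic continuation of `A₃(-s,s)` given by its product formula. -/
noncomputable def A3diag (s : ℂ) : ℂ :=
  riemannZeta 3 * riemannZeta (3/2 - 3*s) * ∏' p : Nat.Primes, A3local s (p : ℕ)

lemma A3_bound1 (s : ℂ) (p : Nat.Primes) :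
    ‖A3local s (p : ℕ) - 1‖ ≤ (p:ℝ)^(-(3/2+s.re)) + (p:ℝ)^(-(5/2-s.re))
      + (p:ℝ)^(-(5/2-3*s.re)) + (p:ℝ)^(-(3-4*s.re)) + (p:ℝ)^(-(9/2-5*s.re)) := by
  have hb : ∀ w : ℂ, ‖((p:ℕ):ℂ) ^ w‖ = ((p:ℕ):ℝ) ^ w.re :=
    fun w => norm_natCast_cpow_of_pos p.prop.pos w
  have h : A3local s (p:ℕ) - 1 =
      (-(((p:ℕ):ℂ) ^ (-(3/2+s))) + ((p:ℕ):ℂ) ^ (-(5/2-s))) + (-(((p:ℕ):ℂ) ^ (-(5/2-3*s))))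
        + (-(((p:ℕ):ℂ) ^ (-(3-4*s)))) + ((p:ℕ):ℂ) ^ (-(9/2-5*s)) := by
    unfold A3local; ring
  rw [h]
  have t1 := hb (-(3/2+s)); have t2 := hb (-(5/2-s)); have t3 := hb (-(5/2-3*s))
  have t4 := hb (-(3-4*s)); have t5 := hb (-(9/2-5*s))
  simp only [neg_re, add_re, sub_re, mul_re, ofReal_re] at t1 t2 t3 t4 t5
  calc ‖_ + _ + _ + _ + (((p:ℕ):ℂ) ^ (-(9/2-5*s)))‖
      ≤ ‖(-(((p:ℕ):ℂ) ^ (-(3/2+s))) + ((p:ℕ):ℂ) ^ (-(5/2-s))) + (-(((p:ℕ):ℂ) ^ (-(5/2-3*s))))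
        + (-(((p:ℕ):ℂ) ^ (-(3-4*s))))‖ + ‖((p:ℕ):ℂ) ^ (-(9/2-5*s))‖ := norm_add_le _ _
    _ ≤ (‖(-(((p:ℕ):ℂ) ^ (-(3/2+s))) + ((p:ℕ):ℂ) ^ (-(5/2-s))) + (-(((p:ℕ):ℂ) ^ (-(5/2-3*s))))‖
        + ‖-(((p:ℕ):ℂ) ^ (-(3-4*s)))‖) + ‖((p:ℕ):ℂ) ^ (-(9/2-5*s))‖ := by
        gcongr; exact norm_add_le _ _
    _ ≤ ((‖-(((p:ℕ):ℂ) ^ (-(3/2+s))) + ((p:ℕ):ℂ) ^ (-(5/2-s))‖ + ‖-(((p:ℕ):ℂ) ^ (-(5/2-3*s)))‖)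
        + ‖-(((p:ℕ):ℂ) ^ (-(3-4*s)))‖) + ‖((p:ℕ):ℂ) ^ (-(9/2-5*s))‖ := by
        gcongr; exact norm_add_le _ _
    _ ≤ (((‖-(((p:ℕ):ℂ) ^ (-(3/2+s)))‖ + ‖((p:ℕ):ℂ) ^ (-(5/2-s))‖) + ‖-(((p:ℕ):ℂ) ^ (-(5/2-3*s)))‖)
        + ‖-(((p:ℕ):ℂ) ^ (-(3-4*s)))‖) + ‖((p:ℕ):ℂ) ^ (-(9/2-5*s))‖ := by
        gcongr; exact norm_add_le _ _
    _ ≤ _ := by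
        rw [norm_neg, norm_neg, norm_neg, t1, t2, t3, t4, t5]
        norm_num

lemma summable_primes_rpow {a : ℝ} (ha : 1 < a) :
    Summable (fun p : Nat.Primes => (p:ℝ) ^ (-a)) :=
  Nat.Primes.summable_rpow.mpr (by linarith)

lemma part1 (s : ℂ) (hs : |s.re| < 1/2) :
    Summable (fun p : Nat.Primes => ‖A3local s (p : ℕ) - 1‖) := by
  obtain ⟨h1, h2⟩ := abs_lt.mp hs
  refine Summable.of_nonneg_of_le (fun p => norm_nonneg _) (A3_bound1 s) ?_
  exact ((((summable_primes_rpow (by linarith)).add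
    (summable_primes_rpow (by linarith))).add
    (summable_primes_rpow (by linarith))).add
    (summable_primes_rpow (by linarith))).add
    (summable_primes_rpow (by linarith))

/-- exponent for uniform bound -/
noncomputable def aexp (σ : ℝ) : ℝ := min (3/2 - σ) (min (5/2 - 3*σ) (3 - 4*σ))

lemma one_lt_aexp {σ : ℝ} (hσ : σ < 1/2) : 1 < aexp σ := by
  unfold aexp
  refine lt_min (by linarith) (lt_min (by linarith) (by linarith))

lemma one_le_p (p : Nat.Primes) : (1:ℝ) ≤ (p:ℕ) := by
  exact_mod_cast p.prop.one_lt.le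

lemma A3_bound2 {σ : ℝ} (hσ : σ < 1/2) {s : ℂ} (hs : |s.re| < σ) (p : Nat.Primes) :
    ‖A3local s (p : ℕ) - 1‖ ≤ 5 * (p:ℝ) ^ (-(aexp σ)) := by
  obtain ⟨h1, h2⟩ := abs_lt.mp hs
  have m1 : aexp σ ≤ 3/2 - σ := min_le_left _ _
  have m2 : aexp σ ≤ 5/2 - 3*σ := (min_le_right _ _).trans (min_le_left _ _)
  have m3 : aexp σ ≤ 3 - 4*σ := (min_le_right _ _).trans (min_le_right _ _)
  have hp := one_le_p p
  have key : ∀ e : ℝ, aexp σ ≤ e → (p:ℝ) ^ (-e) ≤ (p:ℝ) ^ (-(aexp σ)) :=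
    fun e he => Real.rpow_le_rpow_of_exponent_le hp (by linarith)
  refine (A3_bound1 s p).trans ?_
  have k1 := key (3/2+s.re) (by linarith)
  have k2 := key (5/2-s.re) (by linarith)
  have k3 := key (5/2-3*s.re) (by linarith)
  have k4 := key (3-4*s.re) (by linarith)
  have k5 := key (9/2-5*s.re) (by linarith)
  linarith

lemma finite_small : {p : Nat.Primes | (p:ℕ) < 10}.Finite := by
  have : {p : Nat.Primes | (p:ℕ) < 10} = (fun p : Nat.Primes => (p:ℕ)) ⁻¹' (Set.Iio 10) := rfl
  rw [this]
  exact Set.Finite.preimage Subtype.coe_injective.injOn (Set.finite_Iio 10)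

noncomputable def A3F : Finset Nat.Primes := finite_small.toFinset

lemma ten_le {p : Nat.Primes} (hp : p ∉ A3F) : (10:ℝ) ≤ (p:ℕ) := by
  have : ¬ ((p:ℕ) < 10) := by simpa [A3F, finite_small.mem_toFinset] using hp
  exact_mod_cast not_lt.mp this

lemma A3_small {σ : ℝ} (hσ : σ < 1/2) {s : ℂ} (hs : |s.re| < σ) {p : Nat.Primes}
    (hp : p ∉ A3F) : ‖A3local s (p : ℕ) - 1‖ ≤ 1/2 := by
  have h1 := A3_bound2 hσ hs p
  have h2 : (p:ℝ) ^ (-(aexp σ)) ≤ (p:ℝ) ^ (-(1:ℝ)) :=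
    Real.rpow_le_rpow_of_exponent_le (one_le_p p) (by linarith [one_lt_aexp hσ])
  rw [Real.rpow_neg_one] at h2
  have h10 := ten_le hp
  have hp0 : (0:ℝ) < (p:ℕ) := by linarith [one_le_p p]
  have h3 : ((p:ℕ):ℝ)⁻¹ ≤ (10:ℝ)⁻¹ := by
    apply inv_anti₀ (by norm_num) h10
  have := h1.trans (by nlinarith : 5 * (p:ℝ) ^ (-(aexp σ)) ≤ 1/2)
  exact this

lemma A3_ne_zero {σ : ℝ} (hσ : σ < 1/2) {s : ℂ} (hs : |s.re| < σ) {p : Nat.Primes}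
    (hp : p ∉ A3F) : A3local s (p : ℕ) ≠ 0 := by
  intro h0
  have := A3_small hσ hs hp
  rw [h0] at this
  simp at this
  norm_num at this

lemma A3_slit {σ : ℝ} (hσ : σ < 1/2) {s : ℂ} (hs : |s.re| < σ) {p : Nat.Primes}
    (hp : p ∉ A3F) : A3local s (p : ℕ) ∈ slitPlane := by
  have h := mem_slitPlane_of_norm_lt_one (z := A3local s (p:ℕ) - 1)
    (lt_of_le_of_lt (A3_small hσ hs hp) (by norm_num))
  simpa using h

lemma A3_log_le {σ : ℝ} (hσ : σ < 1/2) {s : ℂ} (hs : |s.re| < σ) {p : Nat.Primes}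
    (hp : p ∉ A3F) : ‖Complex.log (A3local s (p : ℕ))‖ ≤ 15/2 * (p:ℝ) ^ (-(aexp σ)) := by
  have h := Complex.norm_log_one_add_half_le_self (z := A3local s (p:ℕ) - 1) (A3_small hσ hs hp)
  have h1 : (1:ℂ) + (A3local s (p:ℕ) - 1) = A3local s (p:ℕ) := by ring
  rw [h1] at h
  have h2 := A3_bound2 hσ hs p
  linarith

lemma A3local_differentiable (p : Nat.Primes) :
    Differentiable ℂ (fun s : ℂ => A3local s (p : ℕ)) := by
  have hp0 : ((p:ℕ):ℂ) ≠ 0 := Nat.cast_ne_zero.mpr p.prop.pos.ne'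
  unfold A3local
  refine (((((differentiable_const _).sub ?_).add ?_).sub ?_).sub ?_).add ?_
  · exact ((differentiable_const _).add differentiable_id).neg.const_cpow (Or.inl hp0)
  · exact ((differentiable_const _).sub differentiable_id).neg.const_cpow (Or.inl hp0)
  · exact ((differentiable_const _).sub ((differentiable_id).const_mul 3)).neg.const_cpow (Or.inl hp0)
  · exact ((differentiable_const _).sub ((differentiable_id).const_mul 4)).neg.const_cpow (Or.inl hp0)
  · exact ((differentiable_const _).sub ((differentiable_id).const_mul 5)).neg.const_cpow (Or.inl hp0)

lemma hnm (p : ↥((A3F : Set Nat.Primes)ᶜ)) : (p : Nat.Primes) ∉ A3F := by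
  have := p.prop
  simp only [Set.mem_compl_iff, Finset.mem_coe] at this
  exact this

/-- The full Euler product. -/
noncomputable def A3P (s : ℂ) : ℂ := ∏' p : Nat.Primes, A3local s (p : ℕ)

/-- sum of logs over large primes -/
noncomputable def A3L (σ : ℝ) (s : ℂ) : ℂ :=
  ∑' p : ↥((A3F : Set Nat.Primes)ᶜ), Complex.log (A3local s ((p : Nat.Primes) : ℕ))

lemma isOpen_U (σ : ℝ) : IsOpen {s : ℂ | |s.re| < σ} :=
  isOpen_lt (continuous_abs.comp Complex.continuous_re) continuous_const

lemma A3L_diffOn {σ : ℝ} (hσ : σ < 1/2) :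
    DifferentiableOn ℂ (A3L σ) {s : ℂ | |s.re| < σ} := by
  refine differentiableOn_tsum_of_summable_norm
    (u := fun p : ↥((A3F : Set Nat.Primes)ᶜ) => 15/2 * ((p : Nat.Primes):ℝ) ^ (-(aexp σ)))
    ?_ ?_ (isOpen_U σ) ?_
  · exact (((summable_primes_rpow (one_lt_aexp hσ)).mul_left _).subtype _)
  · intro p s hs
    exact (((A3local_differentiable p).differentiableAt).clog
      (A3_slit hσ hs (hnm p))).differentiableWithinAt
  · intro p w hw
    exact A3_log_le hσ hw p.prop

lemma A3_log_summable {σ : ℝ} (hσ : σ < 1/2) {s : ℂ} (hs : |s.re| < σ) :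
    Summable (fun p : ↥((A3F : Set Nat.Primes)ᶜ) =>
      Complex.log (A3local s ((p : Nat.Primes) : ℕ))) := by
  apply Summable.of_norm
  refine Summable.of_nonneg_of_le (fun p => norm_nonneg _)
    (fun p => A3_log_le hσ hs (hnm p))
    (((summable_primes_rpow (one_lt_aexp hσ)).mul_left _).subtype _)

lemma A3_hasProd_tail {σ : ℝ} (hσ : σ < 1/2) {s : ℂ} (hs : |s.re| < σ) :
    HasProd (fun p : ↥((A3F : Set Nat.Primes)ᶜ) => A3local s ((p : Nat.Primes) : ℕ))
      (Complex.exp (A3L σ s)) := by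
  have h := (A3_log_summable hσ hs).hasSum.cexp
  have h2 : (cexp ∘ fun p : ↥((A3F : Set Nat.Primes)ᶜ) =>
      Complex.log (A3local s ((p : Nat.Primes) : ℕ)))
      = fun p : ↥((A3F : Set Nat.Primes)ᶜ) => A3local s ((p : Nat.Primes) : ℕ) :=
    funext fun p => Complex.exp_log (A3_ne_zero hσ hs (hnm p))
  rw [h2] at h
  exact h

lemma A3_hasProd {σ : ℝ} (hσ : σ < 1/2) {s : ℂ} (hs : |s.re| < σ) :
    HasProd (fun p : Nat.Primes => A3local s (p : ℕ))
      ((∏ p ∈ A3F, A3local s (p : ℕ)) * Complex.exp (A3L σ s)) := by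
  have ha : HasProd ((fun p : Nat.Primes => A3local s (p : ℕ)) ∘ (↑) :
      ↥(A3F : Set Nat.Primes) → ℂ) (∏ p ∈ A3F, A3local s (p : ℕ)) := by
    have := hasProd_fintype ((fun p : Nat.Primes => A3local s (p : ℕ)) ∘ (↑) :
      ↥(A3F : Set Nat.Primes) → ℂ)
    have he : (∏ b : ↥(A3F : Set Nat.Primes), ((fun p : Nat.Primes => A3local s (p : ℕ)) ∘ (↑)) b)
        = ∏ p ∈ A3F, A3local s (p : ℕ) := by
      simp only [Function.comp_apply]
      rw [Finset.prod_set_coe (f := fun p : Nat.Primes => A3local s (p : ℕ)) (s := (A3F : Set Nat.Primes)), Finset.toFinset_coe]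
    rwa [he] at this
  exact ha.mul_compl (A3_hasProd_tail hσ hs)

lemma A3P_eq {σ : ℝ} (hσ : σ < 1/2) {s : ℂ} (hs : |s.re| < σ) :
    A3P s = (∏ p ∈ A3F, A3local s (p : ℕ)) * Complex.exp (A3L σ s) := by
  exact (A3_hasProd hσ hs).tprod_eq

lemma A3P_diffOn {σ : ℝ} (hσ : σ < 1/2) :
    DifferentiableOn ℂ A3P {s : ℂ | |s.re| < σ} := by
  refine DifferentiableOn.congr (𝕜 := ℂ) (f₁ := A3P) (s := {s : ℂ | |s.re| < σ})
    (f := fun s => (∏ p ∈ A3F, A3local s (p : ℕ)) * Complex.exp (A3L σ s)) ?_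
    ?_
  · exact ((Differentiable.fun_finsetProd
      (fun p _ => A3local_differentiable p)).differentiableOn).mul (A3L_diffOn hσ).cexp
  · intro x hx
    simpa using A3P_eq hσ hx

lemma A3P_analyticAt {s : ℂ} (hs : |s.re| < 1/2) : AnalyticAt ℂ A3P s := by
  set σ := (|s.re| + 1/2)/2 with hσdef
  have h1 : |s.re| < σ := by simp only [hσdef]; linarith [abs_nonneg s.re]
  have h2 : σ < 1/2 := by simp only [hσdef]; linarith
  exact (A3P_diffOn h2).analyticAt ((isOpen_U σ).mem_nhds h1)

/-- `(w-1) ζ(w)` with the removable singularity at `w = 1` filled in. -/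
noncomputable def zetaH : ℂ → ℂ :=
  Function.update (fun w => (w - 1) * riemannZeta w) 1 1

lemma zetaH_one : zetaH 1 = 1 := Function.update_self _ _ _

lemma zetaH_ne {w : ℂ} (hw : w ≠ 1) : zetaH w = (w - 1) * riemannZeta w :=
  Function.update_of_ne hw _ _

lemma zetaH_analyticAt (w : ℂ) : AnalyticAt ℂ zetaH w := by
  rcases eq_or_ne w 1 with rfl | hw
  · apply Complex.analyticAt_of_differentiable_on_punctured_nhds_of_continuousAt
    · filter_upwards [self_mem_nhdsWithin] with z hz
      have hz' : z ≠ 1 := hz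
      have hopen : {x : ℂ | x ≠ 1} ∈ nhds z := isOpen_ne.mem_nhds hz'
      have hd : DifferentiableAt ℂ (fun x => (x - 1) * riemannZeta x) z :=
        ((differentiableAt_id.sub (differentiableAt_const _)).mul
          (differentiableAt_riemannZeta hz'))
      apply hd.congr_of_eventuallyEq
      filter_upwards [hopen] with x hx
      exact zetaH_ne hx
    · rw [zetaH, continuousAt_update_same]
      exact riemannZeta_residue_one
  · have hopen : {x : ℂ | x ≠ 1} ∈ nhds w := isOpen_ne.mem_nhds hw
    have hzeta : AnalyticAt ℂ riemannZeta w := by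
      refine DifferentiableOn.analyticAt (s := {x : ℂ | x ≠ 1}) ?_ hopen
      exact fun z hz => (differentiableAt_riemannZeta hz).differentiableWithinAt
    have h1 : AnalyticAt ℂ (fun x : ℂ => (x - 1) * riemannZeta x) w :=
      ((analyticAt_id.sub analyticAt_const).mul hzeta)
    apply h1.congr
    filter_upwards [hopen] with x hx
    exact (zetaH_ne hx).symm

lemma re_ofDiv (a b : ℝ) (hb : b ≠ 0) : ((a:ℂ)/(b:ℂ)).re = a / b := by
  rw [show (a:ℂ)/(b:ℂ) = ((a/b : ℝ) : ℂ) by push_cast; ring]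
  exact Complex.ofReal_re _

lemma hasProd_one_sub {s : ℂ} (hs : 1 < s.re) :
    HasProd (fun p : Nat.Primes => 1 - (p : ℂ) ^ (-s)) (riemannZeta s)⁻¹ := by
  have hz := riemannZeta_eulerProduct_hasProd hs
  have hne : riemannZeta s ≠ 0 := riemannZeta_ne_zero_of_one_lt_re hs
  have h := hz.inv₀ hne
  unfold HasProd at h ⊢
  refine h.congr fun F => ?_
  exact Finset.prod_congr rfl fun p _ => inv_inv _

lemma A3local_sixth (p : Nat.Primes) :
    A3local (1/6) (p : ℕ) = (1 - ((p:ℕ) : ℂ) ^ (-(5/3 : ℂ))) * (1 - ((p:ℕ) : ℂ) ^ (-(2 : ℂ))) := by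
  have hp0 : ((p:ℕ):ℂ) ≠ 0 := Nat.cast_ne_zero.mpr p.prop.pos.ne'
  unfold A3local
  rw [show (-(3/2 + (1/6 : ℂ))) = -(5/3 : ℂ) by norm_num,
    show (-(5/2 - (1/6 : ℂ))) = -(7/3 : ℂ) by norm_num,
    show (-(5/2 - 3*(1/6 : ℂ))) = -(2 : ℂ) by norm_num,
    show (-(3 - 4*(1/6 : ℂ))) = -(7/3 : ℂ) by norm_num,
    show (-(9/2 - 5*(1/6 : ℂ))) = (-(5/3 : ℂ)) + (-(2:ℂ)) by norm_num,
    Complex.cpow_add _ _ hp0]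
  ring

lemma A3P_sixth : A3P (1/6) = (riemannZeta (5/3))⁻¹ * (riemannZeta 2)⁻¹ := by
  have h53 : (1:ℝ) < ((5/3 : ℂ)).re := by
    have : (5/3 : ℂ) = ((5/3 : ℝ) : ℂ) := by norm_num
    rw [this, Complex.ofReal_re]; norm_num
  have h2 : (1:ℝ) < ((2 : ℂ)).re := by norm_num
  have hp := (hasProd_one_sub h53).mul (hasProd_one_sub h2)
  rw [A3P]
  rw [tprod_congr A3local_sixth]
  exact hp.tprod_eq

theorem stmt12 :
    (∀ s : ℂ, |s.re| < 1/2 → Summable (fun p : Nat.Primes => ‖A3local s (p : ℕ) - 1‖)) ∧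
    ∃ G : ℂ → ℂ, AnalyticOnNhd ℂ G {s : ℂ | |s.re| < 1/2} ∧
      (∀ s : ℂ, |s.re| < 1/2 → s ≠ 1/6 → A3diag s = G s / (s - 1/6)) ∧
      G (1/6) = -(riemannZeta 3) / (3 * riemannZeta (5/3) * riemannZeta 2) := by
  refine ⟨part1, fun s => (-(1:ℂ)/3) * (riemannZeta 3 * zetaH (3/2 - 3*s) * A3P s), ?_, ?_, ?_⟩
  · intro s hs
    have hs' : |s.re| < 1/2 := hs
    have hA : AnalyticAt ℂ (fun s : ℂ => 3/2 - 3*s) s :=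
      analyticAt_const.sub (analyticAt_const.mul analyticAt_id)
    exact analyticAt_const.mul
      ((analyticAt_const.mul ((zetaH_analyticAt _).comp hA)).mul (A3P_analyticAt hs'))
  · intro s hs hne
    have hd : A3diag s = riemannZeta 3 * riemannZeta (3/2 - 3*s) * A3P s := rfl
    have h31 : (3/2 - 3*s : ℂ) ≠ 1 := by
      intro h
      apply hne
      linear_combination (-(1:ℂ)/3) * h
    have hsub : s - 1/6 ≠ 0 := sub_ne_zero.mpr hne
    beta_reduce
    rw [hd, zetaH_ne h31, eq_div_iff hsub]
    ring
  · beta_reduce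
    rw [show (3/2 - 3*(1/6 : ℂ)) = 1 by norm_num, zetaH_one, A3P_sixth]
    have hz53 : riemannZeta (5/3) ≠ 0 := by
      apply riemannZeta_ne_zero_of_one_lt_re
      rw [show (5/3 : ℂ) = ((5/3 : ℝ) : ℂ) by norm_num, Complex.ofReal_re]; norm_num
    have hz2 : riemannZeta 2 ≠ 0 := riemannZeta_ne_zero_of_one_lt_re (by norm_num)
    rw [eq_div_iff (mul_ne_zero (mul_ne_zero (by norm_num : (3:ℂ) ≠ 0) hz53) hz2)]
    field_simp
    try ring
    try exact Or.inl trivial
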